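/- Let q be a power of 2, let α ∈ F_q have absolute trace Tr(α) = 1, and let λ ∈ F_q have Tr(λ) = 0. Then no two points (equal or distinct) of the conic C_{λ²} : X₂² + X₂X₃ + αX₃² + λ²X₁² = 0 in PG(2,q) are conjugate with respect to the pseudo polarity; that is, for all points R = (r₁,r₂,r₃) and S = (s₁,s₂,s₃) on C_{λ²}, one has r₁s₁ + r₃s₂ + r₂s₃ ≠ 0. -/

import Mathlib

lemma my_trace_sq {F : Type} [Field F] [Fintype F] [Algebra (ZMod 2) F] (x : F) :
    Algebra.trace (ZMod 2) F (x ^ 2) = Algebra.trace (ZMod 2) F x := by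
  haveI : CharP F 2 := charP_of_injective_algebraMap (algebraMap (ZMod 2) F).injective 2
  let e : F ≃ₐ[ZMod 2] F :=
    { frobeniusEquiv F 2 with
      commutes' := fun r => by
        have h : r ^ 2 = r := by revert r; decide
        show frobenius F 2 (algebraMap (ZMod 2) F r) = algebraMap (ZMod 2) F r
        rw [frobenius_def, ← map_pow, h] }
  have he := Algebra.trace_eq_of_algEquiv e x
  have hx : e x = x ^ 2 := rfl
  rw [hx] at he
  exact he

lemma my_no_root {F : Type} [Field F] [Fintype F] [Algebra (ZMod 2) F] {β : F}
    (hβ : Algebra.trace (ZMod 2) F β = 1) (t : F) (h : t ^ 2 + t + β = 0) : False := by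
  haveI : CharP F 2 := charP_of_injective_algebraMap (algebraMap (ZMod 2) F).injective 2
  have h2 : (2 : F) = 0 := by exact_mod_cast CharP.cast_eq_zero F 2
  have hb : β = t ^ 2 + t := by linear_combination h - (t ^ 2 + t) * h2
  rw [hb, map_add, my_trace_sq] at hβ
  have hz : ∀ z : ZMod 2, z + z = 0 := by decide
  rw [hz] at hβ
  exact zero_ne_one hβ

lemma my_no_root_hom {F : Type} [Field F] [Fintype F] [Algebra (ZMod 2) F] (x y β : F)
    (hy : y ≠ 0) (hβ : Algebra.trace (ZMod 2) F β = 1)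
    (h : x ^ 2 + x * y + β * y ^ 2 = 0) : False := by
  apply my_no_root hβ (x / y)
  field_simp
  linear_combination h

/-- Let `q = 2ⁿ`, let `α ∈ F_q` have absolute trace `1` and `l ∈ F_q` have absolute
trace `0`. Then no two points (equal or distinct) of the conic
`C_{l²} : X₂² + X₂X₃ + αX₃² + l²X₁² = 0` of `PG(2,q)` are conjugate with respect to the
pseudo polarity: for any representatives `r`, `s` of points of `C_{l²}` one has
`r₁s₁ + r₃s₂ + r₂s₃ ≠ 0`. -/
theorem conic_self_non_conjugate
    (n : ℕ) (hn : 0 < n)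
    (F : Type) [Field F] [Fintype F] [Algebra (ZMod 2) F]
    (hF : Fintype.card F = 2 ^ n)
    (α l : F) (hα : Algebra.trace (ZMod 2) F α = 1)
    (hl : Algebra.trace (ZMod 2) F l = 0)
    (r s : Fin 3 → F) (hr : r ≠ 0) (hs : s ≠ 0)
    (hrC : r 1 ^ 2 + r 1 * r 2 + α * r 2 ^ 2 + l ^ 2 * r 0 ^ 2 = 0)
    (hsC : s 1 ^ 2 + s 1 * s 2 + α * s 2 ^ 2 + l ^ 2 * s 0 ^ 2 = 0) :
    r 0 * s 0 + r 2 * s 1 + r 1 * s 2 ≠ 0 := by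
  intro hcon
  haveI : CharP F 2 := charP_of_injective_algebraMap (algebraMap (ZMod 2) F).injective 2
  have h2 : (2 : F) = 0 := by exact_mod_cast CharP.cast_eq_zero F 2
  have ztriv : ∀ z : ZMod 2, z ≠ 1 → z = 0 := by decide
  -- every point of the conic has nonzero first coordinate
  have key : ∀ t : Fin 3 → F, t ≠ 0 →
      t 1 ^ 2 + t 1 * t 2 + α * t 2 ^ 2 + l ^ 2 * t 0 ^ 2 = 0 → t 0 ≠ 0 := by
    intro t ht htc h0
    by_cases h2' : t 2 = 0
    · have e : t 1 ^ 2 = 0 := by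
        linear_combination htc - (t 1 + α * t 2) * h2' - l ^ 2 * t 0 * h0
      have h1 : t 1 = 0 := by
        exact pow_eq_zero_iff (by norm_num : (2 : ℕ) ≠ 0) |>.mp e
      exact ht (funext fun i => by fin_cases i <;> simpa [h0, h1, h2'])
    · exact my_no_root_hom (t 1) (t 2) α h2' hα
        (by linear_combination htc - l ^ 2 * t 0 * h0)
  have hr0 := key r hr hrC
  have hs0 := key s hs hsC
  by_cases hr2 : r 2 = 0
  · -- case r₂ = 0 : then r₁ = l·r₀ and s₀ = l·s₂
    have e : (r 1 + l * r 0) ^ 2 = 0 := by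
      linear_combination hrC - (r 1 + α * r 2) * hr2 + (l * r 0 * r 1) * h2
    have h3 : r 1 + l * r 0 = 0 := pow_eq_zero_iff (by norm_num : (2 : ℕ) ≠ 0) |>.mp e
    have hr1 : r 1 = l * r 0 := by linear_combination h3 - l * r 0 * h2
    have hmul : r 0 * (s 0 + l * s 2) = 0 := by
      linear_combination hcon - s 1 * hr2 - s 2 * hr1
    have h4 : s 0 + l * s 2 = 0 := (mul_eq_zero.mp hmul).resolve_left hr0
    have hs02 : s 0 = l * s 2 := by linear_combination h4 - l * s 2 * h2
    have hs2 : s 2 ≠ 0 := by intro hs2'; exact hs0 (by rw [hs02, hs2', mul_zero])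
    have hβ : Algebra.trace (ZMod 2) F (α + l ^ 4) = 1 := by
      rw [map_add, hα, show l ^ 4 = (l ^ 2) ^ 2 from by ring, my_trace_sq, my_trace_sq,
        hl, add_zero]
    exact my_no_root_hom (s 1) (s 2) (α + l ^ 4) hs2 hβ
      (by linear_combination hsC - l ^ 2 * (s 0 + l * s 2) * hs02)
  · -- main case r₂ ≠ 0
    have htr : Algebra.trace (ZMod 2) F (l * r 0 / r 2) = 1 := by
      by_contra hne
      have h0' : Algebra.trace (ZMod 2) F (l * r 0 / r 2) = 0 := ztriv _ hne
      have hβ : Algebra.trace (ZMod 2) F (α + (l * r 0 / r 2) ^ 2) = 1 := by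
        rw [map_add, hα, my_trace_sq, h0', add_zero]
      apply my_no_root_hom (r 1) (r 2) _ hr2 hβ
      field_simp
      linear_combination hrC
    have hl0 : l ≠ 0 := by
      intro hl'
      rw [hl', zero_mul, zero_div, map_zero] at htr
      exact zero_ne_one htr
    have E : l ^ 2 * r 0 ^ 2 * s 2 ^ 2 + r 0 * r 2 * s 0 * s 2 + r 0 ^ 2 * s 0 ^ 2
        + l ^ 2 * r 2 ^ 2 * s 0 ^ 2 = 0 := by
      linear_combination s 2 ^ 2 * hrC + r 2 ^ 2 * hsC
        + (r 0 * s 0 + r 2 * s 1 + r 1 * s 2 + r 2 * s 2) * hcon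
        - (α * r 2 ^ 2 * s 2 ^ 2 + r 2 ^ 2 * s 1 * s 2 + r 2 ^ 2 * s 1 ^ 2
          + r 1 * r 2 * s 2 ^ 2 + r 1 * r 2 * s 1 * s 2 + r 1 ^ 2 * s 2 ^ 2
          + r 0 * r 2 * s 0 * s 1 + r 0 * r 1 * s 0 * s 2) * h2
    have hβ : Algebra.trace (ZMod 2) F ((l * r 0 / r 2) ^ 2 + l ^ 4) = 1 := by
      rw [map_add, my_trace_sq, htr, show l ^ 4 = (l ^ 2) ^ 2 from by ring, my_trace_sq,
        my_trace_sq, hl, add_zero]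
    apply my_no_root hβ (l ^ 2 * r 0 * s 2 / (r 2 * s 0))
    field_simp
    linear_combination l ^ 2 * E
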